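/- For all α ∈ (0, 1/2], the inequality (4(1-α)²/(2-α)²)·(1 - sin²(πα/2)/(α(2-α))) > (4cos²(π/(3-α)))² holds. -/

import Mathlib

open Real

set_option maxHeartbeats 2000000

private lemma aux_sin_lb {x : ℝ} (hx : 0 ≤ x) : x - x^3/6 ≤ Real.sin x := by
  have hd : ∀ y : ℝ, HasDerivAt (fun t => Real.sin t - t + t^3/6)
      (Real.cos y - 1 + y^2/2) y := by
    intro y
    have h1 := Real.hasDerivAt_sin y
    have h2 : HasDerivAt (fun t : ℝ => t^3/6) (y^2/2) y := by
      have := (hasDerivAt_pow 3 y).div_const 6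
      refine this.congr_deriv ?_
      push_cast
      ring
    exact (h1.sub (hasDerivAt_id y)).add h2
  have mono : Monotone (fun t => Real.sin t - t + t^3/6) := by
    apply monotone_of_deriv_nonneg (fun y => (hd y).differentiableAt)
    intro y
    rw [(hd y).deriv]
    have := Real.one_sub_sq_div_two_le_cos (x := y)
    linarith
  have h0 := mono hx
  simp only [Real.sin_zero] at h0
  norm_num at h0
  linarith

private lemma aux_cos_ub {x : ℝ} (hx : 0 ≤ x) (hx2 : x ≤ 2) :
    Real.cos x ≤ 1 - x^2/2 + x^4/24 := by
  have h1 : Real.cos x = 1 - 2 * Real.sin (x/2)^2 := by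
    have h2 := Real.cos_two_mul (x/2)
    have h3 := Real.sin_sq_add_cos_sq (x/2)
    have h4 : Real.cos x = Real.cos (2*(x/2)) := by congr 1; ring
    rw [h4, h2]; linarith
  have h5 : x/2 - (x/2)^3/6 ≤ Real.sin (x/2) := aux_sin_lb (by linarith)
  have h6 : 0 ≤ x/2 - (x/2)^3/6 := by
    nlinarith [mul_nonneg (by linarith : (0:ℝ) ≤ x/2) (by nlinarith : (0:ℝ) ≤ 1 - (x/2)^2)]
  have h7 : (x/2 - (x/2)^3/6)^2 ≤ Real.sin (x/2)^2 := by nlinarith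
  rw [h1]; nlinarith [h7, pow_nonneg hx 6]

private lemma aux_sin_ub {x : ℝ} (hx : 0 ≤ x) (hx2 : x ≤ 2) :
    Real.sin x ≤ x - x^3/6 + x^5/120 := by
  have hd : ∀ y : ℝ, HasDerivAt (fun t => t - t^3/6 + t^5/120 - Real.sin t)
      (1 - y^2/2 + y^4/24 - Real.cos y) y := by
    intro y
    have h1 := Real.hasDerivAt_sin y
    have h2 : HasDerivAt (fun t : ℝ => t^3/6) (y^2/2) y := by
      have := (hasDerivAt_pow 3 y).div_const 6
      refine this.congr_deriv ?_; push_cast; ring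
    have h3 : HasDerivAt (fun t : ℝ => t^5/120) (y^4/24) y := by
      have := (hasDerivAt_pow 5 y).div_const 120
      refine this.congr_deriv ?_; push_cast; ring
    exact (((hasDerivAt_id y).sub h2).add h3).sub h1
  have mono : MonotoneOn (fun t => t - t^3/6 + t^5/120 - Real.sin t) (Set.Icc 0 2) := by
    apply monotoneOn_of_deriv_nonneg (convex_Icc 0 2)
    · exact (Differentiable.continuous (fun y => (hd y).differentiableAt)).continuousOn
    · exact fun y _ => ((hd y).differentiableAt).differentiableWithinAt
    · intro y hy
      rw [interior_Icc] at hy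
      rw [(hd y).deriv]
      have := aux_cos_ub (le_of_lt hy.1) (le_of_lt hy.2)
      linarith
  have h0 := mono (Set.mem_Icc.mpr ⟨le_refl 0, by norm_num⟩)
      (Set.mem_Icc.mpr ⟨hx, hx2⟩) hx
  simp only [Real.sin_zero] at h0
  norm_num at h0
  linarith

private lemma aux_cos_lb {x : ℝ} (hx : 0 ≤ x) (hx2 : x ≤ 2) :
    1 - x^2/2 + x^4/24 - x^6/720 ≤ Real.cos x := by
  have h1 : Real.cos x = 1 - 2 * Real.sin (x/2)^2 := by
    have h2 := Real.cos_two_mul (x/2)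
    have h3 := Real.sin_sq_add_cos_sq (x/2)
    have h4 : Real.cos x = Real.cos (2*(x/2)) := by congr 1; ring
    rw [h4, h2]; linarith
  have h5 : Real.sin (x/2) ≤ x/2 - (x/2)^3/6 + (x/2)^5/120 := aux_sin_ub (by linarith) (by linarith)
  have hs0 : 0 ≤ Real.sin (x/2) := by
    apply Real.sin_nonneg_of_nonneg_of_le_pi (by linarith)
    have := Real.pi_gt_three
    linarith
  have h7 : Real.sin (x/2)^2 ≤ (x/2 - (x/2)^3/6 + (x/2)^5/120)^2 := by nlinarith
  have h8 : (0:ℝ) ≤ (x/2)^8*(40-(x/2)^2) := by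
    apply mul_nonneg (by positivity)
    nlinarith
  rw [h1]; nlinarith [h7, h8]

theorem stmt_0 (α : ℝ) (h0 : 0 < α) (h1 : α ≤ 1/2) :
    (4*(1-α)^2/(2-α)^2) * (1 - (sin (π*α/2))^2 / (α*(2-α))) >
      (4 * (cos (π/(3-α)))^2)^2 := by
  have hp1 : (6283/2000 : ℝ) < π := by have := Real.pi_gt_d4; norm_num at this ⊢; linarith
  have hp2 : π < (3927/1250 : ℝ) := by have := Real.pi_lt_d4; norm_num at this ⊢; linarith
  have hpi0 : (0:ℝ) < π := Real.pi_pos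
  have h3 : (0:ℝ) < 3 - α := by linarith
  have h2m : (0:ℝ) < 2 - α := by linarith
  -- sine part
  set x := π*α/2 with hxdef
  have hx0 : 0 ≤ x := by
    rw [hxdef]; positivity
  have hxle : x ≤ (3927/2500)*α := by
    rw [hxdef]; rw [div_le_iff₀ (by norm_num : (0:ℝ) < 2)]; nlinarith
  have hxge : (6283/4000)*α ≤ x := by
    rw [hxdef]; rw [le_div_iff₀ (by norm_num : (0:ℝ) < 2)]; nlinarith
  have hx2 : x ≤ 1 := by linarith [hxle]
  have hsl : Real.sin x ≤ x - x^3/6 + x^5/120 := aux_sin_ub hx0 (by linarith)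
  have hs0 : 0 ≤ Real.sin x := by
    apply Real.sin_nonneg_of_nonneg_of_le_pi hx0
    linarith
  have hs2 : Real.sin x ^ 2 ≤ (x - x^3/6 + x^5/120)^2 := by nlinarith
  have h40 : x^2 ≤ 40 := by nlinarith
  have hs3 : (x - x^3/6 + x^5/120)^2 ≤ x^2 - x^4/3 + (2/45)*x^6 := by
    nlinarith [mul_nonneg (pow_nonneg hx0 8) (sub_nonneg.mpr h40)]
  have hxp2 : x^2 ≤ ((3927/2500)*α)^2 := pow_le_pow_left₀ hx0 hxle 2
  have hxp6 : x^6 ≤ ((3927/2500)*α)^6 := pow_le_pow_left₀ hx0 hxle 6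
  have hxm4 : ((6283/4000)*α)^4 ≤ x^4 := pow_le_pow_left₀ (by positivity) hxge 4
  have hu : Real.sin x ^ 2 ≤ ((3927/2500)*α)^2 - ((6283/4000)*α)^4/3 + (2/45)*((3927/2500)*α)^6 := by
    linarith
  -- cosine part
  set t := α/(3-α) with htdef
  have ht0 : 0 ≤ t := le_of_lt (div_pos h0 h3)
  have ht5 : t ≤ 1/5 := by
    rw [htdef, div_le_iff₀ h3]; linarith
  set h := 2*π/3*t with hhdef
  have hh0 : 0 ≤ h := by
    rw [hhdef]; positivity
  have hhub : h ≤ (2618/1250)*t := by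
    rw [hhdef]
    apply mul_le_mul_of_nonneg_right _ ht0
    linarith
  have hhlb : (6283/3000)*t ≤ h := by
    rw [hhdef]
    apply mul_le_mul_of_nonneg_right _ ht0
    linarith
  have hh2 : h ≤ 1 := by linarith [hhub, ht5]
  have hcosl : 1 - h^2/2 + h^4/24 - h^6/720 ≤ Real.cos h := aux_cos_lb hh0 (by linarith)
  have hsinl : h - h^3/6 ≤ Real.sin h := aux_sin_lb hh0
  set c := Real.cos (π/(3-α)) with hcdef
  have hiden : 4*c^2 = 2 - Real.cos h - Real.sqrt 3 * Real.sin h := by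
    have e1 : 2*(π/(3-α)) = 2*π/3 + h := by
      rw [hhdef, htdef]
      field_simp
      ring
    have e2 := Real.cos_two_mul (π/(3-α))
    rw [e1] at e2
    have e3 : Real.cos (2*π/3 + h)
        = Real.cos (2*π/3)*Real.cos h - Real.sin (2*π/3)*Real.sin h := Real.cos_add _ _
    have e4 : Real.cos (2*π/3) = -(1/2) := by
      rw [show (2*π/3:ℝ) = π - π/3 by ring, Real.cos_pi_sub, Real.cos_pi_div_three]
    have e5 : Real.sin (2*π/3) = Real.sqrt 3/2 := by
      rw [show (2*π/3:ℝ) = π - π/3 by ring, Real.sin_pi_sub, Real.sin_pi_div_three]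
    rw [e3, e4, e5] at e2
    rw [hcdef]
    linarith
  have hr0 : 0 ≤ Real.sqrt 3 := Real.sqrt_nonneg 3
  have hr2 : Real.sqrt 3 ^ 2 = 3 := Real.sq_sqrt (by norm_num)
  have hrl : (1732/1000:ℝ) ≤ Real.sqrt 3 := by nlinarith
  have hru : Real.sqrt 3 ≤ (17321/10000:ℝ) := by nlinarith
  have hB : 4*c^2 ≤ 1 - (1732/1000)*((6283/3000)*t) + ((2618/1250)*t)^2/2
      + ((17321/10000)/6)*((2618/1250)*t)^3 - ((6283/3000)*t)^4/24 + ((2618/1250)*t)^6/720 := by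
    have b1 : (1732/1000:ℝ)*((6283/3000)*t) ≤ Real.sqrt 3 * h :=
      mul_le_mul hrl hhlb (by positivity) hr0
    have b2 : Real.sqrt 3 * h^3 ≤ (17321/10000:ℝ)*((2618/1250)*t)^3 :=
      mul_le_mul hru (pow_le_pow_left₀ hh0 hhub 3) (pow_nonneg hh0 3) (by norm_num)
    have b3 : h^2 ≤ ((2618/1250)*t)^2 := pow_le_pow_left₀ hh0 hhub 2
    have b4 : h^6 ≤ ((2618/1250)*t)^6 := pow_le_pow_left₀ hh0 hhub 6
    have b5 : ((6283/3000)*t)^4 ≤ h^4 := pow_le_pow_left₀ (by positivity) hhlb 4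
    have b6 : Real.sqrt 3 * (h - h^3/6) ≤ Real.sqrt 3 * Real.sin h :=
      mul_le_mul_of_nonneg_left hsinl hr0
    rw [hiden]
    linarith
  have hc20 : (0:ℝ) ≤ 4*c^2 := by positivity
  set B : ℝ := 1 - (1732/1000)*((6283/3000)*t) + ((2618/1250)*t)^2/2
      + ((17321/10000)/6)*((2618/1250)*t)^3 - ((6283/3000)*t)^4/24 + ((2618/1250)*t)^6/720
    with hBdef
  have hBB : (4*c^2)^2 ≤ B^2 := by nlinarith [hB, hc20]
  -- the key rational-function inequality
  have hQ : (0:ℝ) < (2473519138907055589513390161883196787180109798727218679/3417187500000000000000000000000000000000000000000000:ℝ) + (3318787594006573266224226015588221738327441184593093821/170859375000000000000000000000000000000000000000000:ℝ)*(1/2-α) + (439420780578670505397655402212441976731413303143532584307/2562890625000000000000000000000000000000000000000000:ℝ)*(1/2-α)^2 + (2440112897576936019982126851933224663163991787372559210707/2883251953125000000000000000000000000000000000000000:ℝ)*(1/2-α)^3 + (15712974625173633028998203600324425214401079656270076805581/5766503906250000000000000000000000000000000000000000:ℝ)*(1/2-α)^4 + (8690232657471432770017091236200372194330708962741486521037/1441625976562500000000000000000000000000000000000000:ℝ)*(1/2-α)^5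 + (899125313147624125920386009208160854088860554705383642973/96108398437500000000000000000000000000000000000000:ℝ)*(1/2-α)^6 + (308810872958600399948638437889676583706567985854086532031/30033874511718750000000000000000000000000000000000:ℝ)*(1/2-α)^7 + (956119713105119340685179516608755978935214148112076174213/120135498046875000000000000000000000000000000000000:ℝ)*(1/2-α)^8 + (125066253312363999918546607854039403735335965223644275783/30033874511718750000000000000000000000000000000000:ℝ)*(1/2-α)^9 + (37256535685905133969190015008104021306224207242625594531/30033874511718750000000000000000000000000000000000:ℝ)*(1/2-α)^10 - (19188973962386994539267555821898583693885270700656179/750846862792968750000000000000000000000000000000:ℝ)*(1/2-α)^11 - (5192571141831247182157626645381858852633349839168532457/22525405883789062500000000000000000000000000000000:ℝ)*(1/2-α)^12 - (705875828737189042568266518846463662826512324311843821/5631351470947265625000000000000000000000000000000:ℝ)*(1/2-α)^13 - (218947031781718877031967343309048413122735445820968679/5631351470947265625000000000000000000000000000000:ℝ)*(1/2-α)^14 - (305322857609005155076138343/39062500000000000000000:ℝ)*(1/2-α)^15 - (237353025646052027203643131/234375000000000000000000:ℝ)*(1/2-α)^16 - (11817371704694247092709/152587890625000000000:ℝ)*(1/2-α)^17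 - (407495576023939554921/152587890625000000000:ℝ)*(1/2-α)^18 := by
    obtain ⟨b, hbdef⟩ : ∃ b : ℝ, b = 1/2 - α := ⟨_, rfl⟩
    rw [← hbdef]
    have hb0 : 0 ≤ b := by rw [hbdef]; linarith
    have hb5 : b ≤ 1/2 := by rw [hbdef]; linarith
    have p1 : 0 ≤ b := hb0
    have p2 : 0 ≤ b^2 := by positivity
    have p3 : 0 ≤ b^3 := by positivity
    have p4 : 0 ≤ b^4 := by positivity
    have p5 : 0 ≤ b^5 := by positivity
    have p6 : 0 ≤ b^6 := by positivity
    have p7 : 0 ≤ b^7 := by positivity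
    have p8 : 0 ≤ b^8 := by positivity
    have p9 : 0 ≤ b^9 := by positivity
    have p10 : 0 ≤ b^10 := by positivity
    have q11 : b^11 ≤ (1/2:ℝ)^11 := pow_le_pow_left₀ hb0 hb5 11
    have q12 : b^12 ≤ (1/2:ℝ)^12 := pow_le_pow_left₀ hb0 hb5 12
    have q13 : b^13 ≤ (1/2:ℝ)^13 := pow_le_pow_left₀ hb0 hb5 13
    have q14 : b^14 ≤ (1/2:ℝ)^14 := pow_le_pow_left₀ hb0 hb5 14
    have q15 : b^15 ≤ (1/2:ℝ)^15 := pow_le_pow_left₀ hb0 hb5 15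
    have q16 : b^16 ≤ (1/2:ℝ)^16 := pow_le_pow_left₀ hb0 hb5 16
    have q17 : b^17 ≤ (1/2:ℝ)^17 := pow_le_pow_left₀ hb0 hb5 17
    have q18 : b^18 ≤ (1/2:ℝ)^18 := pow_le_pow_left₀ hb0 hb5 18
    norm_num only at q11 q12 q13 q14 q15 q16 q17 q18 ⊢
    linarith
  have hane : α ≠ 0 := ne_of_gt h0
  have h2ne : (2-α) ≠ 0 := ne_of_gt h2m
  have h3ne : (3-α) ≠ 0 := ne_of_gt h3
  have efrac : 4*(1-α)^2/(2-α)^2 * (1 - (((3927/2500)*α)^2 - ((6283/4000)*α)^4/3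
        + (2/45)*((3927/2500)*α)^6)/(α*(2-α))) - B^2
      = (α^2*((2473519138907055589513390161883196787180109798727218679/3417187500000000000000000000000000000000000000000000:ℝ) + (3318787594006573266224226015588221738327441184593093821/170859375000000000000000000000000000000000000000000:ℝ)*(1/2-α) + (439420780578670505397655402212441976731413303143532584307/2562890625000000000000000000000000000000000000000000:ℝ)*(1/2-α)^2 + (2440112897576936019982126851933224663163991787372559210707/2883251953125000000000000000000000000000000000000000:ℝ)*(1/2-α)^3 + (15712974625173633028998203600324425214401079656270076805581/5766503906250000000000000000000000000000000000000000:ℝ)*(1/2-α)^4 + (8690232657471432770017091236200372194330708962741486521037/1441625976562500000000000000000000000000000000000000:ℝ)*(1/2-α)^5 + (899125313147624125920386009208160854088860554705383642973/96108398437500000000000000000000000000000000000000:ℝ)*(1/2-α)^6 + (308810872958600399948638437889676583706567985854086532031/30033874511718750000000000000000000000000000000000:ℝ)*(1/2-α)^7 + (956119713105119340685179516608755978935214148112076174213/120135498046875000000000000000000000000000000000000:ℝ)*(1/2-α)^8 + (125066253312363999918546607854039403735335965223644275783/30033874511718750000000000000000000000000000000000:ℝ)*(1/2-α)^9 + (37256535685905133969190015008104021306224207242625594531/30033874511718750000000000000000000000000000000000:ℝ)*(1/2-α)^10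 - (19188973962386994539267555821898583693885270700656179/750846862792968750000000000000000000000000000000:ℝ)*(1/2-α)^11 - (5192571141831247182157626645381858852633349839168532457/22525405883789062500000000000000000000000000000000:ℝ)*(1/2-α)^12 - (705875828737189042568266518846463662826512324311843821/5631351470947265625000000000000000000000000000000:ℝ)*(1/2-α)^13 - (218947031781718877031967343309048413122735445820968679/5631351470947265625000000000000000000000000000000:ℝ)*(1/2-α)^14 - (305322857609005155076138343/39062500000000000000000:ℝ)*(1/2-α)^15 - (237353025646052027203643131/234375000000000000000000:ℝ)*(1/2-α)^16 - (11817371704694247092709/152587890625000000000:ℝ)*(1/2-α)^17 - (407495576023939554921/152587890625000000000:ℝ)*(1/2-α)^18))/(α*(2-α)^3*(3-α)^12) := by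
    rw [hBdef, htdef]
    field_simp
    ring
  have hkey : B^2 < 4*(1-α)^2/(2-α)^2 * (1 - (((3927/2500)*α)^2 - ((6283/4000)*α)^4/3
      + (2/45)*((3927/2500)*α)^6)/(α*(2-α))) := by
    have hnum : (0:ℝ) < α^2*((2473519138907055589513390161883196787180109798727218679/3417187500000000000000000000000000000000000000000000:ℝ) + (3318787594006573266224226015588221738327441184593093821/170859375000000000000000000000000000000000000000000:ℝ)*(1/2-α) + (439420780578670505397655402212441976731413303143532584307/2562890625000000000000000000000000000000000000000000:ℝ)*(1/2-α)^2 + (2440112897576936019982126851933224663163991787372559210707/2883251953125000000000000000000000000000000000000000:ℝ)*(1/2-α)^3 + (15712974625173633028998203600324425214401079656270076805581/5766503906250000000000000000000000000000000000000000:ℝ)*(1/2-α)^4 + (8690232657471432770017091236200372194330708962741486521037/1441625976562500000000000000000000000000000000000000:ℝ)*(1/2-α)^5 + (899125313147624125920386009208160854088860554705383642973/96108398437500000000000000000000000000000000000000:ℝ)*(1/2-α)^6 + (308810872958600399948638437889676583706567985854086532031/30033874511718750000000000000000000000000000000000:ℝ)*(1/2-α)^7 + (956119713105119340685179516608755978935214148112076174213/120135498046875000000000000000000000000000000000000:ℝ)*(1/2-α)^8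 + (125066253312363999918546607854039403735335965223644275783/30033874511718750000000000000000000000000000000000:ℝ)*(1/2-α)^9 + (37256535685905133969190015008104021306224207242625594531/30033874511718750000000000000000000000000000000000:ℝ)*(1/2-α)^10 - (19188973962386994539267555821898583693885270700656179/750846862792968750000000000000000000000000000000:ℝ)*(1/2-α)^11 - (5192571141831247182157626645381858852633349839168532457/22525405883789062500000000000000000000000000000000:ℝ)*(1/2-α)^12 - (705875828737189042568266518846463662826512324311843821/5631351470947265625000000000000000000000000000000:ℝ)*(1/2-α)^13 - (218947031781718877031967343309048413122735445820968679/5631351470947265625000000000000000000000000000000:ℝ)*(1/2-α)^14 - (305322857609005155076138343/39062500000000000000000:ℝ)*(1/2-α)^15 - (237353025646052027203643131/234375000000000000000000:ℝ)*(1/2-α)^16 - (11817371704694247092709/152587890625000000000:ℝ)*(1/2-α)^17 - (407495576023939554921/152587890625000000000:ℝ)*(1/2-α)^18) := mul_pos (by positivity) hQ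
    have hden : (0:ℝ) < α*(2-α)^3*(3-α)^12 := by positivity
    have := div_pos hnum hden
    linarith [efrac, this]
  have hmono : 4*(1-α)^2/(2-α)^2 * (1 - (((3927/2500)*α)^2 - ((6283/4000)*α)^4/3
        + (2/45)*((3927/2500)*α)^6)/(α*(2-α)))
      ≤ 4*(1-α)^2/(2-α)^2 * (1 - Real.sin x ^2/(α*(2-α))) := by
    have d1 : (0:ℝ) ≤ 4*(1-α)^2/(2-α)^2 := by positivity
    have dpos : (0:ℝ) < α*(2-α) := mul_pos h0 h2m
    have d2 : Real.sin x ^2/(α*(2-α)) ≤ (((3927/2500)*α)^2 - ((6283/4000)*α)^4/3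
        + (2/45)*((3927/2500)*α)^6)/(α*(2-α)) := by
      apply div_le_div_of_nonneg_right hu dpos.le |>.trans_eq rfl
    apply mul_le_mul_of_nonneg_left _ d1
    linarith
  rw [gt_iff_lt]
  calc (4*c^2)^2 ≤ B^2 := hBB
    _ < _ := lt_of_lt_of_le hkey hmono
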